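/- Let 0 < s_1 < s_2 < ... < s_k ≤ N be integers, S = {s_1,...,s_k}, τ ∈ ℝ, and ρ : ℤ → [0,1]. Define φ(i,n) = 1 - ρ(n) + ρ(n)·τ^{k-i+1}. Then Σ_{S ⊆ Y ⊆ [1,N]} τ^{σ(S,Y)} · Π_{n ∈ Y} ρ(n) · Π_{n ∈ [1,N]∖Y} (1-ρ(n)) = τ^{k(k+1)/2} · Π_{n ∈ S} ρ(n) · Π_{i=1}^k Π_{n ∈ (s_{i-1}, s_i)} φ(i,n), where s_0 = 0 and (s_{i-1}, s_i) denotes the integers strictly between s_{i-1} and s_i. -/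

import Mathlib

/-- σ(U,V) = #{(u,v) : u ∈ U, v ∈ V, u ≥ v} for finite sets of integers. -/
def sigmaPairs (U V : Finset ℤ) : ℕ :=
  ((U ×ˢ V).filter fun p => p.2 ≤ p.1).card

lemma sigmaPairs_eq_sum (U V : Finset ℤ) :
    sigmaPairs U V = ∑ v ∈ V, (U.filter fun u => v ≤ u).card := by
  classical
  rw [sigmaPairs, Finset.card_filter, Finset.sum_product, Finset.sum_comm]
  congr 1; ext v
  rw [Finset.card_filter]

lemma gauss_icc (k : ℕ) : (∑ i ∈ Finset.Icc 1 k, i) * 2 = k * (k + 1) := by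
  induction k with
  | zero => simp
  | succ m ih =>
    rw [Finset.sum_Icc_succ_top (by omega), add_mul, ih]
    ring

lemma gauss_refl (k : ℕ) : ∑ i ∈ Finset.Icc 1 k, (k - i + 1) = k * (k + 1) / 2 := by
  have h1 : ∑ i ∈ Finset.Icc 1 k, (k - i + 1) = ∑ i ∈ Finset.Icc 1 k, i := by
    apply Finset.sum_nbij' (i := fun a => k + 1 - a) (j := fun a => k + 1 - a) <;>
      simp only [Finset.mem_Icc] <;> intros <;> omega
  have h2 := gauss_icc k
  obtain ⟨t, ht⟩ : ∃ t, k * (k + 1) = t := ⟨_, rfl⟩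
  rw [ht] at h2 ⊢
  omega

/-- The key averaging identity: for `S = {s 1 < ⋯ < s k} ⊆ [1,N]` (with `s 0 = 0`),
`∑_{S ⊆ Y ⊆ [1,N]} τ^{σ(S,Y)} ∏_{n∈Y} ρ n ∏_{n∈[1,N]∖Y} (1-ρ n)
  = τ^{k(k+1)/2} ∏_{n∈S} ρ n ∏_{i=1}^k ∏_{n∈(s(i-1), s i)} φ(i,n)`,
where `φ(i,n) = 1 - ρ n + ρ n · τ^{k-i+1}`. -/
theorem bernoulli_sigma_average (k : ℕ) (N : ℤ) (s : ℕ → ℤ) (hs0 : s 0 = 0)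
    (hmono : ∀ i, i < k → s i < s (i + 1))
    (hpos : ∀ i, 1 ≤ i → i ≤ k → 0 < s i) (hsN : s k ≤ N)
    (S : Finset ℤ) (hS : S = (Finset.Icc 1 k).image s)
    (τ : ℝ) (ρ : ℤ → ℝ) (hρ : ∀ n, 0 ≤ ρ n ∧ ρ n ≤ 1) :
    ∑ Y ∈ (Finset.Icc 1 N).powerset.filter (fun Y => S ⊆ Y),
        τ ^ sigmaPairs S Y * (∏ n ∈ Y, ρ n) * ∏ n ∈ Finset.Icc 1 N \ Y, (1 - ρ n) =
      τ ^ (k * (k + 1) / 2) * (∏ n ∈ S, ρ n) *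
        ∏ i ∈ Finset.Icc 1 k, ∏ n ∈ Finset.Ioo (s (i - 1)) (s i),
          (1 - ρ n + ρ n * τ ^ (k - i + 1)) := by
    classical
  have hle : ∀ i j, i ≤ j → j ≤ k → s i ≤ s j := by
    intro i j hij hj
    induction j with
    | zero => interval_cases i; exact le_rfl
    | succ m ih =>
      rcases Nat.eq_or_lt_of_le hij with h | h
      · rw [h]
      · exact le_trans (ih (by omega) (by omega)) (le_of_lt (hmono m (by omega)))
  have hlt : ∀ i j, i < j → j ≤ k → s i < s j := by
    intro i j hij hj
    obtain ⟨m, rfl⟩ : ∃ m, j = m + 1 := ⟨j - 1, by omega⟩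
    exact lt_of_le_of_lt (hle i m (by omega) (by omega)) (hmono m (by omega))
  have hinj : ∀ i j, i ≤ k → j ≤ k → s i = s j → i = j := by
    intro i j hi hj hij
    by_contra h
    rcases Nat.lt_or_ge i j with h' | h'
    · exact absurd hij (ne_of_lt (hlt i j h' hj))
    · exact absurd hij.symm (ne_of_lt (hlt j i (by omega) hi))
  have hcount : ∀ i, 1 ≤ i → i ≤ k → ∀ n : ℤ, s (i-1) < n → n ≤ s i →
      (S.filter fun u => n ≤ u).card = k - i + 1 := by
    intro i h1 h2 n hn1 hn2
    have hset : S.filter (fun u => n ≤ u) = (Finset.Icc i k).image s := by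
      ext u
      simp only [hS, Finset.mem_filter, Finset.mem_image, Finset.mem_Icc]
      constructor
      · rintro ⟨⟨j, ⟨hj1, hj2⟩, rfl⟩, hn⟩
        refine ⟨j, ⟨?_, hj2⟩, rfl⟩
        by_contra hc
        have : s j ≤ s (i-1) := hle j (i-1) (by omega) (by omega)
        omega
      · rintro ⟨j, ⟨hj1, hj2⟩, rfl⟩
        exact ⟨⟨j, ⟨by omega, hj2⟩, rfl⟩, le_trans hn2 (hle i j hj1 hj2)⟩
    rw [hset, Finset.card_image_of_injOn, Nat.card_Icc]
    · omega
    · intro a ha b hb hab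
      simp only [Finset.coe_Icc, Set.mem_Icc] at ha hb
      exact hinj a b ha.2 hb.2 hab
  have hzero : ∀ n : ℤ, s k < n → (S.filter fun u => n ≤ u).card = 0 := by
    intro n hn
    rw [Finset.card_eq_zero, Finset.filter_eq_empty_iff]
    intro u hu
    simp only [hS, Finset.mem_image, Finset.mem_Icc] at hu
    obtain ⟨j, ⟨hj1, hj2⟩, rfl⟩ := hu
    have := hle j k hj2 le_rfl
    omega
  have hsS : sigmaPairs S S = k * (k + 1) / 2 := by
    rw [sigmaPairs_eq_sum]
    conv_lhs => rw [hS]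
    rw [Finset.sum_image (by
      intro a ha b hb hab
      simp only [Finset.mem_coe, Finset.mem_Icc] at ha hb
      exact hinj a b ha.2 hb.2 hab)]
    rw [← gauss_refl k]
    apply Finset.sum_congr rfl
    intro i hi
    simp only [Finset.mem_Icc] at hi
    rw [← hS]
    exact hcount i hi.1 hi.2 (s i) (hlt (i-1) i (by omega) hi.2) le_rfl
  have hSsub : S ⊆ Finset.Icc 1 N := by
    intro x hx
    simp only [hS, Finset.mem_image, Finset.mem_Icc] at hx
    obtain ⟨j, ⟨hj1, hj2⟩, rfl⟩ := hx
    simp only [Finset.mem_Icc]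
    exact ⟨hpos j hj1 hj2, le_trans (hle j k hj2 le_rfl) hsN⟩
  set A := Finset.Icc 1 N \ S with hA
  -- Step 1: reindex the sum over Y by T = Y \ S
  have step1 : ∑ Y ∈ (Finset.Icc 1 N).powerset.filter (fun Y => S ⊆ Y),
        τ ^ sigmaPairs S Y * (∏ n ∈ Y, ρ n) * ∏ n ∈ Finset.Icc 1 N \ Y, (1 - ρ n)
      = ∑ T ∈ A.powerset,
        τ ^ sigmaPairs S (S ∪ T) * (∏ n ∈ S ∪ T, ρ n) *
          ∏ n ∈ Finset.Icc 1 N \ (S ∪ T), (1 - ρ n) := by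
    apply Finset.sum_nbij' (i := fun Y => Y \ S) (j := fun T => S ∪ T)
    · intro Y hY
      simp only [Finset.mem_filter, Finset.mem_powerset] at hY
      simp only [Finset.mem_powerset, hA]
      exact Finset.sdiff_subset_sdiff hY.1 le_rfl
    · intro T hT
      simp only [Finset.mem_powerset, hA] at hT
      simp only [Finset.mem_filter, Finset.mem_powerset]
      exact ⟨Finset.union_subset hSsub (hT.trans Finset.sdiff_subset), Finset.subset_union_left⟩
    · intro Y hY
      simp only [Finset.mem_filter, Finset.mem_powerset] at hY
      exact Finset.union_sdiff_of_subset hY.2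
    · intro T hT
      simp only [Finset.mem_powerset, hA] at hT
      exact Finset.union_sdiff_cancel_left (Finset.disjoint_left.mpr fun a haS haT =>
        ((Finset.mem_sdiff.mp (hT haT)).2 haS))
    · intro Y hY
      simp only [Finset.mem_filter, Finset.mem_powerset] at hY
      rw [Finset.union_sdiff_of_subset hY.2]
  rw [step1]
  -- Step 2: rewrite each summand
  have step2 : ∀ T ∈ A.powerset,
      τ ^ sigmaPairs S (S ∪ T) * (∏ n ∈ S ∪ T, ρ n) *
          ∏ n ∈ Finset.Icc 1 N \ (S ∪ T), (1 - ρ n)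
      = τ ^ (k * (k + 1) / 2) * (∏ n ∈ S, ρ n) *
        ((∏ n ∈ T, ρ n * τ ^ (S.filter fun u => n ≤ u).card) *
          ∏ n ∈ A \ T, (1 - ρ n)) := by
    intro T hT
    simp only [Finset.mem_powerset, hA] at hT
    have hdisj : Disjoint S T := Finset.disjoint_left.mpr fun a haS haT =>
      ((Finset.mem_sdiff.mp (hT haT)).2 haS)
    have h1 : sigmaPairs S (S ∪ T) = sigmaPairs S S + sigmaPairs S T := by
      rw [sigmaPairs_eq_sum, Finset.sum_union hdisj, ← sigmaPairs_eq_sum, ← sigmaPairs_eq_sum]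
    have h2 : Finset.Icc 1 N \ (S ∪ T) = A \ T := (sdiff_sdiff _ _ _).symm
    have h3 : (τ : ℝ) ^ sigmaPairs S T = ∏ n ∈ T, τ ^ (S.filter fun u => n ≤ u).card := by
      rw [Finset.prod_pow_eq_pow_sum, sigmaPairs_eq_sum]
    rw [h1, h2, pow_add, hsS, Finset.prod_union hdisj, h3, Finset.prod_mul_distrib]
    ring
  rw [Finset.sum_congr rfl step2, ← Finset.mul_sum]
  -- Step 3: product formula
  rw [show (∑ T ∈ A.powerset,
      (∏ n ∈ T, ρ n * τ ^ (S.filter fun u => n ≤ u).card) * ∏ n ∈ A \ T, (1 - ρ n))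
      = ∏ n ∈ A, (ρ n * τ ^ (S.filter fun u => n ≤ u).card + (1 - ρ n)) from
    (Finset.prod_add _ _ _).symm]
  -- Step 4: partition A
  have hpart : A = ((Finset.Icc 1 k).biUnion fun i => Finset.Ioo (s (i-1)) (s i))
      ∪ Finset.Ioc (s k) N := by
    ext n
    simp only [hA, Finset.mem_sdiff, Finset.mem_union, Finset.mem_biUnion, Finset.mem_Icc,
      Finset.mem_Ioo, Finset.mem_Ioc, hS, Finset.mem_image, not_exists]
    constructor
    · rintro ⟨⟨hn1, hn2⟩, hnS⟩
      rcases le_or_gt n (s k) with h | h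
      · left
        have hk1 : 1 ≤ k := by
          by_contra hc
          have hk0 : k = 0 := by omega
          rw [hk0, hs0] at h
          omega
        have hFne : ((Finset.Icc 1 k).filter fun j => n ≤ s j).Nonempty :=
          ⟨k, by simp [Finset.mem_filter, Finset.mem_Icc, hk1, h]⟩
        set i0 := ((Finset.Icc 1 k).filter fun j => n ≤ s j).min' hFne with hi0
        have hmin := Finset.min'_mem _ hFne
        rw [← hi0] at hmin
        simp only [Finset.mem_filter, Finset.mem_Icc] at hmin
        have hminle : ∀ a ∈ (Finset.Icc 1 k).filter fun j => n ≤ s j, i0 ≤ a :=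
          fun a ha => Finset.min'_le _ a ha
        refine ⟨i0, ⟨hmin.1.1, hmin.1.2⟩, ?_, ?_⟩
        · by_contra hc
          push_neg at hc
          rcases Nat.eq_or_lt_of_le hmin.1.1 with h1 | h1
          · have hs1 : s (i0 - 1) = 0 := by rw [← h1]; exact hs0
            omega
          · have hmem : i0 - 1 ∈ (Finset.Icc 1 k).filter fun j => n ≤ s j := by
              simp only [Finset.mem_filter, Finset.mem_Icc]
              exact ⟨⟨by omega, by omega⟩, hc⟩
            have := hminle _ hmem
            omega
        · rcases lt_or_eq_of_le hmin.2 with h2 | h2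
          · exact h2
          · exact absurd ⟨⟨hmin.1.1, hmin.1.2⟩, h2.symm⟩ (hnS i0)
      · right; exact ⟨h, hn2⟩
    · rintro (⟨i, ⟨hi1, hi2⟩, hn1, hn2⟩ | ⟨hn1, hn2⟩)
      · have h0 : (0:ℤ) ≤ s (i-1) := by rw [← hs0]; exact hle 0 (i-1) (by omega) (by omega)
        refine ⟨⟨by omega, le_trans (le_of_lt hn2) (le_trans (hle i k hi2 le_rfl) hsN)⟩, ?_⟩
        intro j
        rintro ⟨⟨hj1, hj2⟩, rfl⟩
        rcases Nat.lt_or_ge j i with h' | h'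
        · have := hle j (i-1) (by omega) (by omega); omega
        · have := hle i j h' hj2; omega
      · have h0 : (0:ℤ) ≤ s k := by rw [← hs0]; exact hle 0 k (by omega) le_rfl
        refine ⟨⟨by omega, hn2⟩, ?_⟩
        intro j
        rintro ⟨⟨hj1, hj2⟩, rfl⟩
        have := hle j k hj2 le_rfl
        omega
  -- Step 5: compute the product over A
  have hdisj2 : Disjoint ((Finset.Icc 1 k).biUnion fun i => Finset.Ioo (s (i-1)) (s i))
      (Finset.Ioc (s k) N) := by
    rw [Finset.disjoint_left]
    intro n hn1 hn2
    simp only [Finset.mem_biUnion, Finset.mem_Icc, Finset.mem_Ioo] at hn1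
    simp only [Finset.mem_Ioc] at hn2
    obtain ⟨i, ⟨hi1, hi2⟩, _, h2⟩ := hn1
    have := hle i k hi2 le_rfl
    omega
  have hpd : (↑(Finset.Icc 1 k) : Set ℕ).PairwiseDisjoint
      fun i => Finset.Ioo (s (i-1)) (s i) := by
    intro a ha b hb hab
    simp only [Finset.coe_Icc, Set.mem_Icc] at ha hb
    apply Finset.disjoint_left.mpr
    intro n hna hnb
    simp only [Finset.mem_Ioo] at hna hnb
    rcases Nat.lt_or_ge a b with h' | h'
    · have := hle a (b-1) (by omega) (by omega); omega
    · have hba : b < a := by omega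
      have := hle b (a-1) (by omega) (by omega); omega
  rw [hpart, Finset.prod_union hdisj2, Finset.prod_biUnion hpd]
  have hone : ∏ n ∈ Finset.Ioc (s k) N,
      (ρ n * τ ^ (S.filter fun u => n ≤ u).card + (1 - ρ n)) = 1 := by
    apply Finset.prod_eq_one
    intro n hn
    simp only [Finset.mem_Ioc] at hn
    rw [hzero n hn.1, pow_zero]
    ring
  rw [hone, mul_one]
  congr 1
  apply Finset.prod_congr rfl
  intro i hi
  apply Finset.prod_congr rfl
  intro n hn
  simp only [Finset.mem_Icc] at hi
  simp only [Finset.mem_Ioo] at hn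
  rw [hcount i hi.1 hi.2 n hn.1 (le_of_lt hn.2)]
  ring
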